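/- arXiv:1002.0348 — 4 statements merged into one kernel-verified Lean document; each statement's English description precedes it below -/
import Mathlib

section
/- Fix ℓ ≥ 1 and integers 0 ≤ n_1 ≤ n_2 ≤ … ≤ n_ℓ. There is a bijection between the product set π_{n_1} × π_{n_2−n_1} × ⋯ × π_{n_ℓ−n_{ℓ−1}} of tuples of partitions (where π_m is the set of partitions of length at most m) and the set of sequences ((i_1, r_1), …, (i_n, r_n)) with n = n_1 + (n_2−n_1) + … + (n_ℓ−n_{ℓ−1}) = n_ℓ, i_t ∈ {1,…,ℓ}, r_t ∈ ℤ_{>0}, such that: #{t : i_t = 1} = n_1 and #{t : i_t = s} = n_s − n_{s−1} for s ≥ 2; the sequence is sorted so that (i_{t}, r_{t}) precedes (i_{t+1}, r_{t+1}) in the order (−r < −r', or r = r' and larger row index first); r_{t+1} − r_t ≥ θ(i_t − i_{t+1}) + 1 for all t; and r_1 ≥ 1. Moreover, under this bijection, the total degree r_1 + … + r_n of the image exceeds the total weight of the tuple of partitions by the constant Σ_{i=1}^{ℓ} n_i² − Σ_{i=1}^{ℓ−1} n_i n_{i+1}. -/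
/-- The step function θ : ℤ → {0,1}. -/
def theta (k : ℤ) : ℤ := if k < 0 then 0 else 1

namespace Stmt4Aux

lemma theta_nonneg (k : ℤ) : 0 ≤ theta k := by unfold theta; split <;> norm_num

lemma theta_of_neg {k : ℤ} (h : k < 0) : theta k = 0 := if_pos h
lemma theta_of_nonneg {k : ℤ} (h : 0 ≤ k) : theta k = 1 := if_neg (not_lt.2 h)

/-- adjacent increase implies strict mono on `Fin N`. -/
lemma fin_adj_strictMono {N : ℕ} {α : Type*} [Preorder α] {f : Fin N → α}
    (h : ∀ t : ℕ, (ht : t + 1 < N) → f ⟨t, Nat.lt_of_succ_lt ht⟩ < f ⟨t + 1, ht⟩) :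
    StrictMono f := by
  have key : ∀ (d : ℕ) (a : ℕ) (hb : a + d + 1 < N), f ⟨a, by omega⟩ < f ⟨a + d + 1, hb⟩ := by
    intro d
    induction d with
    | zero => intro a hb; exact h a hb
    | succ d ih =>
      intro a hb
      have h1 : f ⟨a, by omega⟩ < f ⟨a + d + 1, by omega⟩ := ih a (by omega)
      have h2 : f ⟨a + d + 1, by omega⟩ < f ⟨a + d + 1 + 1, by omega⟩ := h (a + d + 1) (by omega)
      have heq : (⟨a + d + 1 + 1, by omega⟩ : Fin N) = ⟨a + (d + 1) + 1, hb⟩ := Fin.mk_eq_mk.2 (by omega)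
      exact h1.trans (heq ▸ h2)
  intro a b hab
  obtain ⟨a, ha⟩ := a
  obtain ⟨b, hb⟩ := b
  have hlt : a < b := hab
  have hd : a + (b - a - 1) + 1 = b := by omega
  have := key (b - a - 1) a (by omega)
  have heq : (⟨a + (b - a - 1) + 1, by omega⟩ : Fin N) = ⟨b, hb⟩ := Fin.mk_eq_mk.2 (by omega)
  exact heq ▸ this

lemma strictMono_le_apply {N : ℕ} {f : Fin N → ℕ} (hf : StrictMono f) (j : Fin N) :
    j.1 ≤ f j := by
  obtain ⟨k, hk⟩ := j
  induction k with
  | zero => simp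
  | succ k ih =>
    have h1 : f ⟨k, by omega⟩ < f ⟨k + 1, hk⟩ := hf (Fin.mk_lt_mk.2 (by omega))
    have := ih (by omega)
    simpa using Nat.lt_of_le_of_lt (by simpa using this) h1

lemma strictMono_add_le {N : ℕ} {f : Fin N → ℕ} (hf : StrictMono f) :
    ∀ (d : ℕ) (a b : Fin N), a.1 + d = b.1 → f a + d ≤ f b := by
  intro d
  induction d with
  | zero =>
    intro a b hab
    have : a = b := Fin.mk_eq_mk.2 (by omega)
    simp [this]
  | succ d ih =>
    intro a b hab
    have hc : a.1 + d < N := by omega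
    have h1 := ih a ⟨a.1 + d, hc⟩ rfl
    have h2 : f ⟨a.1 + d, hc⟩ < f b := hf (by rw [Fin.lt_def]; simp; omega)
    omega

/-- telescoping sum -/
lemma sum_tele (ℓ : ℕ) (n : ℕ → ℕ) (h0 : n 0 = 0)
    (hmono : ∀ i, i < ℓ → n i ≤ n (i + 1)) :
    ∀ L, L ≤ ℓ → ∑ i ∈ Finset.range L, (n (i + 1) - n i) = n L := by
  intro L
  induction L with
  | zero => simp [h0]
  | succ L ih =>
    intro hL
    rw [Finset.sum_range_succ, ih (by omega)]
    have := hmono L (by omega)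
    omega

lemma sumlin (M : ℕ) (c : ℤ) :
    ∑ j ∈ Finset.range M, (c + 2 * (j : ℤ)) = M * c + M * (M - 1) := by
  induction M with
  | zero => simp
  | succ M ih =>
    rw [Finset.sum_range_succ, ih]
    push_cast
    ring

section

variable (ℓ : ℕ) (n : ℕ → ℕ)

/-- the map sending a part to its (value, color) pair -/
def sigmaMap (lam : (i : Fin ℓ) → Fin (n (i.1 + 1) - n i.1) → ℕ)
    (x : Σ i : Fin ℓ, Fin (n (i.1 + 1) - n i.1)) : ℕ ×ₗ ℕ :=
  toLex (lam x.1 x.2 + x.2.1, x.1.1 + 1)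

variable {ℓ n} in
lemma sigmaMap_injective {lam : (i : Fin ℓ) → Fin (n (i.1 + 1) - n i.1) → ℕ}
    (hm : ∀ i, Monotone (lam i)) : Function.Injective (sigmaMap ℓ n lam) := by
  rintro ⟨i, j⟩ ⟨i', j'⟩ hxy
  unfold sigmaMap at hxy
  have h := toLex.injective hxy
  simp only at h
  have h2 : i.1 + 1 = i'.1 + 1 := congrArg Prod.snd h
  have hi : i = i' := Fin.ext (by omega)
  cases hi
  have h1 : lam i j + j.1 = lam i j' + j'.1 := congrArg Prod.fst h
  simp only [Sigma.mk.inj_iff, heq_eq_eq, true_and]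
  rcases lt_trichotomy j j' with hlt | heq | hgt
  · exfalso; have := hm i hlt.le; have : (j : ℕ) < j' := hlt; omega
  · exact heq
  · exfalso; have := hm i hgt.le; have : (j' : ℕ) < j := hgt; omega

end

section

variable {ℓ : ℕ} {n : ℕ → ℕ}
variable (h0 : n 0 = 0) (hmono : ∀ i, i < ℓ → n i ≤ n (i + 1))

/-- the merged finset of (value, color) pairs -/
def Tset (lam : (i : Fin ℓ) → Fin (n (i.1 + 1) - n i.1) → ℕ) : Finset (ℕ ×ₗ ℕ) :=
  Finset.univ.image (sigmaMap ℓ n lam)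

include h0 hmono in
lemma card_Tset {lam : (i : Fin ℓ) → Fin (n (i.1 + 1) - n i.1) → ℕ}
    (hm : ∀ i, Monotone (lam i)) : (Tset lam).card = n ℓ := by
  rw [Tset, Finset.card_image_of_injective _ (sigmaMap_injective hm), Finset.card_univ]
  rw [Fintype.card_sigma]
  simp only [Fintype.card_fin]
  rw [Fin.sum_univ_eq_sum_range (fun i => n (i + 1) - n i)]
  exact sum_tele ℓ n h0 hmono ℓ le_rfl

variable {lam : (i : Fin ℓ) → Fin (n (i.1 + 1) - n i.1) → ℕ} (hm : ∀ i, Monotone (lam i))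

/-- the order embedding enumerating Tset -/
noncomputable def emb : Fin (n ℓ) ↪o ℕ ×ₗ ℕ :=
  (Tset lam).orderEmbOfFin (card_Tset h0 hmono hm)

/-- the forward map -/
noncomputable def fwd (t : Fin (n ℓ)) : ℕ × ℕ :=
  ((ofLex (emb h0 hmono hm t)).2, (ofLex (emb h0 hmono hm t)).1 + t.1 + 1)

lemma emb_mem (t : Fin (n ℓ)) : emb h0 hmono hm t ∈ Tset lam :=
  Finset.orderEmbOfFin_mem _ _ t

lemma emb_surj {y : ℕ ×ₗ ℕ} (hy : y ∈ Tset lam) : ∃ t, emb h0 hmono hm t = y := by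
  have : y ∈ Set.range (emb h0 hmono hm) := by
    rw [emb, Finset.range_orderEmbOfFin]; exact_mod_cast hy
  exact this

lemma image_emb : Finset.univ.image (fun t => emb h0 hmono hm t) = Tset lam := by
  apply Finset.coe_injective
  rw [Finset.coe_image, Finset.coe_univ, Set.image_univ, emb, Finset.range_orderEmbOfFin]


lemma mem_Tset {y : ℕ ×ₗ ℕ} :
    y ∈ Tset lam ↔ ∃ (i : Fin ℓ) (j : Fin (n (i.1 + 1) - n i.1)),
      toLex (lam i j + j.1, i.1 + 1) = y := by
  simp [Tset, sigmaMap, Finset.mem_image, Sigma.exists]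

lemma fwd_prop1 (t : Fin (n ℓ)) :
    1 ≤ (fwd h0 hmono hm t).1 ∧ (fwd h0 hmono hm t).1 ≤ ℓ ∧ 1 ≤ (fwd h0 hmono hm t).2 := by
  have hmem := emb_mem h0 hmono hm t
  rw [mem_Tset] at hmem
  obtain ⟨i, j, hij⟩ := hmem
  have h2 : (ofLex (emb h0 hmono hm t)).2 = i.1 + 1 := by rw [← hij]; rfl
  refine ⟨?_, ?_, ?_⟩
  · show 1 ≤ (ofLex (emb h0 hmono hm t)).2; omega
  · show (ofLex (emb h0 hmono hm t)).2 ≤ ℓ; have := i.2; omega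
  · show 1 ≤ (ofLex (emb h0 hmono hm t)).1 + t.1 + 1; omega

lemma fwd_prop2 (s : ℕ) (hs1 : 1 ≤ s) (hs2 : s ≤ ℓ) :
    (Finset.univ.filter (fun t => (fwd h0 hmono hm t).1 = s)).card = n s - n (s - 1) := by
  have hinj : Function.Injective (fun t => emb h0 hmono hm t) := (emb h0 hmono hm).injective
  have c1 : (Finset.univ.filter (fun t => (fwd h0 hmono hm t).1 = s)).card
      = ((Tset lam).filter (fun y => (ofLex y).2 = s)).card := by
    rw [← image_emb h0 hmono hm, Finset.filter_image,
      Finset.card_image_of_injective _ hinj]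
    rfl
  have c2 : ((Tset lam).filter (fun y => (ofLex y).2 = s)).card
      = (Finset.univ.filter
          (fun x : Σ i : Fin ℓ, Fin (n (i.1 + 1) - n i.1) => x.1.1 + 1 = s)).card := by
    rw [Tset, Finset.filter_image, Finset.card_image_of_injective _ (sigmaMap_injective hm)]
    rfl
  set i0 : Fin ℓ := ⟨s - 1, by omega⟩ with hi0
  have c3 : (Finset.univ.filter
        (fun x : Σ i : Fin ℓ, Fin (n (i.1 + 1) - n i.1) => x.1.1 + 1 = s))
      = Finset.univ.image (fun j : Fin (n (i0.1 + 1) - n i0.1) =>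
          (⟨i0, j⟩ : Σ i : Fin ℓ, Fin (n (i.1 + 1) - n i.1))) := by
    ext ⟨i, j⟩
    simp only [Finset.mem_filter, Finset.mem_univ, true_and, Finset.mem_image,
      Sigma.mk.inj_iff]
    constructor
    · intro h
      have hi : i0 = i := Fin.ext (by simp [hi0]; omega)
      subst hi
      exact ⟨j, rfl, HEq.rfl⟩
    · rintro ⟨j', hij, -⟩
      rw [← hij]
      simp [hi0]; omega
  rw [c1, c2, c3, Finset.card_image_of_injective _ sigma_mk_injective, Finset.card_univ,
    Fintype.card_fin]
  congr 2 <;> simp [hi0] <;> omega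

lemma fwd_adj {t : ℕ} (ht : t + 1 < n ℓ) :
    (ofLex (emb h0 hmono hm ⟨t, Nat.lt_of_succ_lt ht⟩)).1
        < (ofLex (emb h0 hmono hm ⟨t + 1, ht⟩)).1 ∨
      ((ofLex (emb h0 hmono hm ⟨t, Nat.lt_of_succ_lt ht⟩)).1
          = (ofLex (emb h0 hmono hm ⟨t + 1, ht⟩)).1 ∧
        (ofLex (emb h0 hmono hm ⟨t, Nat.lt_of_succ_lt ht⟩)).2
          < (ofLex (emb h0 hmono hm ⟨t + 1, ht⟩)).2) := by
  have h := (emb h0 hmono hm).strictMono (show (⟨t, Nat.lt_of_succ_lt ht⟩ : Fin (n ℓ)) < ⟨t + 1, ht⟩ from Fin.mk_lt_mk.2 (by omega))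
  rw [show emb h0 hmono hm ⟨t, Nat.lt_of_succ_lt ht⟩
      = toLex (ofLex (emb h0 hmono hm ⟨t, Nat.lt_of_succ_lt ht⟩)) from rfl,
    show emb h0 hmono hm ⟨t + 1, ht⟩ = toLex (ofLex (emb h0 hmono hm ⟨t + 1, ht⟩)) from rfl,
    Prod.Lex.lt_iff] at h
  exact h

lemma fwd_prop3 (t : ℕ) (ht : t + 1 < n ℓ) :
    (fwd h0 hmono hm ⟨t, Nat.lt_of_succ_lt ht⟩).2 < (fwd h0 hmono hm ⟨t + 1, ht⟩).2 := by
  show (ofLex (emb h0 hmono hm ⟨t, Nat.lt_of_succ_lt ht⟩)).1 + t + 1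
      < (ofLex (emb h0 hmono hm ⟨t + 1, ht⟩)).1 + (t + 1) + 1
  rcases fwd_adj h0 hmono hm ht with h | ⟨h, -⟩ <;> omega

lemma fwd_prop4 (t : ℕ) (ht : t + 1 < n ℓ) :
    ((fwd h0 hmono hm ⟨t + 1, ht⟩).2 : ℤ) - ((fwd h0 hmono hm ⟨t, Nat.lt_of_succ_lt ht⟩).2 : ℤ) ≥
      theta (((fwd h0 hmono hm ⟨t, Nat.lt_of_succ_lt ht⟩).1 : ℤ)
        - ((fwd h0 hmono hm ⟨t + 1, ht⟩).1 : ℤ)) + 1 := by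
  set a := ofLex (emb h0 hmono hm ⟨t, Nat.lt_of_succ_lt ht⟩) with ha
  set b := ofLex (emb h0 hmono hm ⟨t + 1, ht⟩) with hb
  have hadj := fwd_adj h0 hmono hm ht
  rw [← ha, ← hb] at hadj
  show ((b.1 + (t + 1) + 1 : ℕ) : ℤ) - ((a.1 + t + 1 : ℕ) : ℤ) ≥ theta ((a.2 : ℤ) - (b.2 : ℤ)) + 1
  rcases lt_or_ge (a.2 : ℤ) (b.2 : ℤ) with hc | hc
  · rw [theta_of_neg (by omega)]
    have : a.1 ≤ b.1 := by rcases hadj with h | ⟨h, -⟩ <;> omega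
    push_cast; omega
  · rw [theta_of_nonneg (by omega)]
    have : a.1 < b.1 := by
      rcases hadj with h | ⟨-, h⟩
      · exact h
      · exfalso; have : (a.2 : ℤ) < b.2 := by exact_mod_cast h
        omega
    push_cast; omega

lemma fwd_degree :
    ∑ t, ((fwd h0 hmono hm t).2 : ℤ) =
      (∑ i, ∑ j, (lam i j : ℤ))
        + (∑ i : Fin ℓ, ∑ j ∈ Finset.range (n (i.1 + 1) - n i.1), (j : ℤ))
        + ∑ t ∈ Finset.range (n ℓ), ((t : ℤ) + 1) := by
  have step1 : ∑ t, ((fwd h0 hmono hm t).2 : ℤ)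
      = (∑ t, ((ofLex (emb h0 hmono hm t)).1 : ℤ)) + ∑ t : Fin (n ℓ), ((t.1 : ℤ) + 1) := by
    rw [← Finset.sum_add_distrib]
    refine Finset.sum_congr rfl (fun t _ => ?_)
    show (((ofLex (emb h0 hmono hm t)).1 + t.1 + 1 : ℕ) : ℤ) = _
    push_cast; ring
  have step2 : ∑ t, ((ofLex (emb h0 hmono hm t)).1 : ℤ)
      = ∑ y ∈ Tset lam, ((ofLex y).1 : ℤ) := by
    rw [← image_emb h0 hmono hm,
      Finset.sum_image (fun x _ y _ h => (emb h0 hmono hm).injective h)]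
  have step3 : ∑ y ∈ Tset lam, ((ofLex y).1 : ℤ)
      = ∑ x : (Σ i : Fin ℓ, Fin (n (i.1 + 1) - n i.1)), ((lam x.1 x.2 : ℤ) + (x.2.1 : ℤ)) := by
    rw [Tset, Finset.sum_image (fun x _ y _ h => sigmaMap_injective hm h)]
    refine Finset.sum_congr rfl (fun x _ => ?_)
    show ((lam x.1 x.2 + x.2.1 : ℕ) : ℤ) = _
    push_cast; ring
  have step4 : ∑ x : (Σ i : Fin ℓ, Fin (n (i.1 + 1) - n i.1)), ((lam x.1 x.2 : ℤ) + (x.2.1 : ℤ))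
      = (∑ i, ∑ j, (lam i j : ℤ))
        + ∑ i : Fin ℓ, ∑ j ∈ Finset.range (n (i.1 + 1) - n i.1), (j : ℤ) := by
    rw [← Finset.univ_sigma_univ, Finset.sum_sigma, ← Finset.sum_add_distrib]
    refine Finset.sum_congr rfl (fun i _ => ?_)
    rw [Finset.sum_add_distrib, ← Fin.sum_univ_eq_sum_range (fun j => (j : ℤ))]
  have step5 : ∑ t : Fin (n ℓ), ((t.1 : ℤ) + 1) = ∑ t ∈ Finset.range (n ℓ), ((t : ℤ) + 1) :=
    Fin.sum_univ_eq_sum_range (fun t => ((t : ℤ) + 1)) (n ℓ)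
  rw [step1, step2, step3, step4, step5]

end

section

variable {ℓ : ℕ} {n : ℕ → ℕ}

lemma arith (h0 : n 0 = 0) (hmono : ∀ i, i < ℓ → n i ≤ n (i + 1)) :
    ∀ L, L ≤ ℓ →
      (∑ t ∈ Finset.range (n L), ((t : ℤ) + 1))
        + (∑ i ∈ Finset.range L, ∑ j ∈ Finset.range (n (i + 1) - n i), (j : ℤ))
      = (∑ i ∈ Finset.Icc 1 L, (n i : ℤ) ^ 2)
        - ∑ i ∈ Finset.Icc 1 (L - 1), (n i : ℤ) * (n (i + 1) : ℤ) := by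
  intro L
  induction L with
  | zero => simp [h0]
  | succ L ih =>
    intro hL
    have hab : n L ≤ n (L + 1) := hmono L (by omega)
    have ihh := ih (by omega)
    -- split the first sum
    have hsplit : ∑ t ∈ Finset.range (n (L + 1)), ((t : ℤ) + 1)
        = (∑ t ∈ Finset.range (n L), ((t : ℤ) + 1))
          + ∑ j ∈ Finset.range (n (L + 1) - n L), (((n L + j : ℕ) : ℤ) + 1) := by
      rw [Finset.range_eq_Ico, ← Finset.sum_Ico_consecutive _ (Nat.zero_le (n L)) hab,
        ← Finset.range_eq_Ico, Finset.sum_Ico_eq_sum_range]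
    rw [Finset.sum_range_succ, hsplit]
    -- combine the two new sums
    have hcomb : (∑ j ∈ Finset.range (n (L + 1) - n L), (((n L + j : ℕ) : ℤ) + 1))
        + ∑ j ∈ Finset.range (n (L + 1) - n L), (j : ℤ)
        = ((n (L + 1) : ℤ) - n L) * ((n L : ℤ) + 1)
          + ((n (L + 1) : ℤ) - n L) * (((n (L + 1) : ℤ) - n L) - 1) := by
      rw [← Finset.sum_add_distrib]
      have : ∀ j ∈ Finset.range (n (L + 1) - n L),
          (((n L + j : ℕ) : ℤ) + 1) + (j : ℤ) = ((n L : ℤ) + 1) + 2 * (j : ℤ) := by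
        intro j _; push_cast; ring
      rw [Finset.sum_congr rfl this, sumlin]
      rw [Nat.cast_sub hab]
    -- RHS delta
    have hR1 : ∑ i ∈ Finset.Icc 1 (L + 1), (n i : ℤ) ^ 2
        = (∑ i ∈ Finset.Icc 1 L, (n i : ℤ) ^ 2) + (n (L + 1) : ℤ) ^ 2 := by
      rw [← Finset.sum_Icc_succ_top (by omega : 1 ≤ L + 1)]
    have hR2 : ∑ i ∈ Finset.Icc 1 (L + 1 - 1), (n i : ℤ) * (n (i + 1) : ℤ)
        = (∑ i ∈ Finset.Icc 1 (L - 1), (n i : ℤ) * (n (i + 1) : ℤ))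
          + (n L : ℤ) * (n (L + 1) : ℤ) := by
      rcases Nat.eq_zero_or_pos L with hL0 | hL0
      · subst hL0; simp [h0]
      · obtain ⟨K, rfl⟩ : ∃ K, L = K + 1 := ⟨L - 1, by omega⟩
        simp only [Nat.add_sub_cancel]
        rw [← Finset.sum_Icc_succ_top (by omega : 1 ≤ K + 1)]
    rw [hR1, hR2]
    have := hcomb
    nlinarith [this, ihh, sq_nonneg ((n (L+1) : ℤ) - n L)]

end

section

variable {ℓ : ℕ} {n : ℕ → ℕ} {p : Fin (n ℓ) → ℕ × ℕ}

/-- the (value, color) pair of a sequence entry -/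
def gmap (p : Fin (n ℓ) → ℕ × ℕ) (t : Fin (n ℓ)) : ℕ ×ₗ ℕ :=
  toLex ((p t).2 - (t.1 + 1), (p t).1)

variable (hp1 : ∀ t, 1 ≤ (p t).1 ∧ (p t).1 ≤ ℓ ∧ 1 ≤ (p t).2)
variable (hp2 : ∀ s, 1 ≤ s → s ≤ ℓ →
    (Finset.univ.filter (fun t => (p t).1 = s)).card = n s - n (s - 1))
variable (hp4 : ∀ t : ℕ, (h : t + 1 < n ℓ) →
    ((p ⟨t + 1, h⟩).2 : ℤ) - ((p ⟨t, Nat.lt_of_succ_lt h⟩).2 : ℤ) ≥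
      theta (((p ⟨t, Nat.lt_of_succ_lt h⟩).1 : ℤ) - ((p ⟨t + 1, h⟩).1 : ℤ)) + 1)

include hp1 hp4 in
lemma r_ge : ∀ (k : ℕ) (hk : k < n ℓ), k + 1 ≤ (p ⟨k, hk⟩).2 := by
  intro k
  induction k with
  | zero => intro hk; exact (hp1 ⟨0, hk⟩).2.2
  | succ k ih =>
    intro hk
    have h4 := hp4 k hk
    have ht := theta_nonneg (((p ⟨k, Nat.lt_of_succ_lt hk⟩).1 : ℤ) - ((p ⟨k + 1, hk⟩).1 : ℤ))
    have := ih (Nat.lt_of_succ_lt hk)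
    omega

include hp1 hp4 in
lemma gmap_strictMono : StrictMono (gmap p) := by
  apply fin_adj_strictMono
  intro t ht
  have hA := r_ge hp1 hp4 t (Nat.lt_of_succ_lt ht)
  have hB := r_ge hp1 hp4 (t + 1) ht
  have h4 := hp4 t ht
  set A := (p ⟨t, Nat.lt_of_succ_lt ht⟩).2 with hA'
  set B := (p ⟨t + 1, ht⟩).2 with hB'
  set cA := (p ⟨t, Nat.lt_of_succ_lt ht⟩).1 with hcA
  set cB := (p ⟨t + 1, ht⟩).1 with hcB
  show toLex (A - (t + 1), cA) < toLex (B - (t + 1 + 1), cB)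
  rw [Prod.Lex.lt_iff]
  simp only [ofLex_toLex]
  rcases Nat.lt_or_ge cA cB with hc | hc
  · rw [theta_of_neg (show (cA : ℤ) - (cB : ℤ) < 0 by omega)] at h4
    rcases Nat.lt_or_ge (A - (t + 1)) (B - (t + 1 + 1)) with h | h
    · exact Or.inl h
    · exact Or.inr ⟨by omega, hc⟩
  · rw [theta_of_nonneg (show (0 : ℤ) ≤ (cA : ℤ) - (cB : ℤ) by omega)] at h4
    exact Or.inl (by omega)

/-- the per-color value sets -/
def Sset (p : Fin (n ℓ) → ℕ × ℕ) (i : Fin ℓ) : Finset ℕ :=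
  (Finset.univ.filter (fun t => (p t).1 = i.1 + 1)).image (fun t => (p t).2 - (t.1 + 1))

include hp1 hp2 hp4 in
lemma card_Sset (i : Fin ℓ) : (Sset p i).card = n (i.1 + 1) - n i.1 := by
  rw [Sset, Finset.card_image_of_injOn, hp2 (i.1 + 1) (by omega) i.2]
  · simp
  · intro t ht t' ht' heq
    simp only [Finset.mem_coe, Finset.mem_filter] at ht ht'
    simp only at heq
    by_contra hne
    have hmono := gmap_strictMono hp1 hp4
    rcases lt_trichotomy t t' with h | h | h
    · have := hmono h
      rw [gmap, gmap, Prod.Lex.lt_iff] at this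
      simp only [ofLex_toLex] at this
      rcases this with h' | ⟨-, h'⟩ <;> omega
    · exact hne h
    · have := hmono h
      rw [gmap, gmap, Prod.Lex.lt_iff] at this
      simp only [ofLex_toLex] at this
      rcases this with h' | ⟨-, h'⟩ <;> omega

/-- the backward map -/
noncomputable def bwdLam (i : Fin ℓ) (j : Fin (n (i.1 + 1) - n i.1)) : ℕ :=
  (Sset p i).orderEmbOfFin (card_Sset hp1 hp2 hp4 i) j - j.1

include hp1 hp2 hp4 in
lemma bwdLam_mono (i : Fin ℓ) : Monotone (bwdLam hp1 hp2 hp4 i) := by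
  intro a b hab
  have hsm := ((Sset p i).orderEmbOfFin (card_Sset hp1 hp2 hp4 i)).strictMono
  have h1 := strictMono_le_apply hsm a
  have h2 := strictMono_add_le hsm (b.1 - a.1) a b (by have : a.1 ≤ b.1 := hab; omega)
  unfold bwdLam
  have : a.1 ≤ b.1 := hab
  omega

end

section

variable {ℓ : ℕ} {n : ℕ → ℕ}
variable (h0 : n 0 = 0) (hmono : ∀ i, i < ℓ → n i ≤ n (i + 1))
variable {lam : (i : Fin ℓ) → Fin (n (i.1 + 1) - n i.1) → ℕ} (hm : ∀ i, Monotone (lam i))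

include hm in
lemma lam_add_strictMono (i : Fin ℓ) : StrictMono (fun j : Fin (n (i.1 + 1) - n i.1) => lam i j + j.1) :=
  fun a b h => Nat.add_lt_add_of_le_of_lt (hm i h.le) h

include h0 hmono hm in
lemma Sset_fwd (i : Fin ℓ) :
    Sset (fwd h0 hmono hm) i
      = Finset.univ.image (fun j : Fin (n (i.1 + 1) - n i.1) => lam i j + j.1) := by
  ext x
  simp only [Sset, Finset.mem_image, Finset.mem_filter, Finset.mem_univ, true_and]
  constructor
  · rintro ⟨t, hcol, hval⟩
    have hmem := emb_mem h0 hmono hm t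
    rw [mem_Tset] at hmem
    obtain ⟨i', j, hij⟩ := hmem
    have h2 : (ofLex (emb h0 hmono hm t)).2 = i'.1 + 1 := by rw [← hij]; rfl
    have h1 : (ofLex (emb h0 hmono hm t)).1 = lam i' j + j.1 := by rw [← hij]; rfl
    have hcol' : (fwd h0 hmono hm t).1 = i'.1 + 1 := h2
    have hii : i' = i := Fin.ext (by rw [hcol'] at hcol; omega)
    subst hii
    refine ⟨j, ?_⟩
    rw [← hval]
    show lam i' j + j.1 = (ofLex (emb h0 hmono hm t)).1 + t.1 + 1 - (t.1 + 1)
    omega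
  · rintro ⟨j, hj⟩
    have hy : toLex (lam i j + j.1, i.1 + 1) ∈ Tset lam := mem_Tset.2 ⟨i, j, rfl⟩
    obtain ⟨t, ht⟩ := emb_surj h0 hmono hm hy
    have h2 : (ofLex (emb h0 hmono hm t)).2 = i.1 + 1 := by rw [ht]; rfl
    have h1 : (ofLex (emb h0 hmono hm t)).1 = lam i j + j.1 := by rw [ht]; rfl
    refine ⟨t, h2, ?_⟩
    show (ofLex (emb h0 hmono hm t)).1 + t.1 + 1 - (t.1 + 1) = x
    omega

include h0 hmono hm in
lemma bwd_fwd
    (h1 : ∀ t, 1 ≤ (fwd h0 hmono hm t).1 ∧ (fwd h0 hmono hm t).1 ≤ ℓ ∧ 1 ≤ (fwd h0 hmono hm t).2)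
    (h2 : ∀ s, 1 ≤ s → s ≤ ℓ →
      (Finset.univ.filter (fun t => (fwd h0 hmono hm t).1 = s)).card = n s - n (s - 1))
    (h4 : ∀ t : ℕ, (h : t + 1 < n ℓ) →
      ((fwd h0 hmono hm ⟨t + 1, h⟩).2 : ℤ) - ((fwd h0 hmono hm ⟨t, Nat.lt_of_succ_lt h⟩).2 : ℤ) ≥
        theta (((fwd h0 hmono hm ⟨t, Nat.lt_of_succ_lt h⟩).1 : ℤ)
          - ((fwd h0 hmono hm ⟨t + 1, h⟩).1 : ℤ)) + 1) :
    bwdLam h1 h2 h4 = lam := by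
  funext i j
  have hcard : (Finset.univ.image
      (fun j : Fin (n (i.1 + 1) - n i.1) => lam i j + j.1)).card = n (i.1 + 1) - n i.1 := by
    rw [Finset.card_image_of_injective _ (lam_add_strictMono hm i).injective, Finset.card_univ,
      Fintype.card_fin]
  have huniq : (fun j : Fin (n (i.1 + 1) - n i.1) => lam i j + j.1)
      = ⇑((Sset (fwd h0 hmono hm) i).orderEmbOfFin (card_Sset h1 h2 h4 i)) := by
    apply Finset.orderEmbOfFin_unique
    · intro j
      rw [Sset_fwd h0 hmono hm i]
      exact Finset.mem_image_of_mem _ (Finset.mem_univ j)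
    · exact lam_add_strictMono hm i
  show (Sset (fwd h0 hmono hm) i).orderEmbOfFin (card_Sset h1 h2 h4 i) j - j.1 = lam i j
  rw [← congrFun huniq j]
  omega

end

section

variable {ℓ : ℕ} {n : ℕ → ℕ} {p : Fin (n ℓ) → ℕ × ℕ}
variable (h0 : n 0 = 0) (hmono : ∀ i, i < ℓ → n i ≤ n (i + 1))
variable (hp1 : ∀ t, 1 ≤ (p t).1 ∧ (p t).1 ≤ ℓ ∧ 1 ≤ (p t).2)
variable (hp2 : ∀ s, 1 ≤ s → s ≤ ℓ →
    (Finset.univ.filter (fun t => (p t).1 = s)).card = n s - n (s - 1))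
variable (hp4 : ∀ t : ℕ, (h : t + 1 < n ℓ) →
    ((p ⟨t + 1, h⟩).2 : ℤ) - ((p ⟨t, Nat.lt_of_succ_lt h⟩).2 : ℤ) ≥
      theta (((p ⟨t, Nat.lt_of_succ_lt h⟩).1 : ℤ) - ((p ⟨t + 1, h⟩).1 : ℤ)) + 1)

include hp1 hp2 hp4 in
lemma Tset_bwd : Tset (bwdLam hp1 hp2 hp4) = Finset.univ.image (gmap p) := by
  ext y
  rw [mem_Tset]
  simp only [Finset.mem_image, Finset.mem_univ, true_and]
  constructor
  · rintro ⟨i, j, hij⟩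
    set e := (Sset p i).orderEmbOfFin (card_Sset hp1 hp2 hp4 i) with he
    have hje := strictMono_le_apply e.strictMono j
    have hbl : bwdLam hp1 hp2 hp4 i j + j.1 = e j := by
      show e j - j.1 + j.1 = e j; omega
    have hmem : e j ∈ Sset p i := Finset.orderEmbOfFin_mem _ _ j
    rw [Sset, Finset.mem_image] at hmem
    obtain ⟨t, htf, htv⟩ := hmem
    rw [Finset.mem_filter] at htf
    refine ⟨t, ?_⟩
    rw [← hij, hbl]
    show gmap p t = toLex (e j, i.1 + 1)
    rw [gmap, ← htv, htf.2]
  · rintro ⟨t, ht⟩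
    have hb := hp1 t
    set i : Fin ℓ := ⟨(p t).1 - 1, by omega⟩ with hi
    have hcol : (p t).1 = i.1 + 1 := by simp [hi]; omega
    have hvmem : (p t).2 - (t.1 + 1) ∈ Sset p i := by
      rw [Sset, Finset.mem_image]
      exact ⟨t, Finset.mem_filter.2 ⟨Finset.mem_univ t, hcol⟩, rfl⟩
    set e := (Sset p i).orderEmbOfFin (card_Sset hp1 hp2 hp4 i) with he
    have hsurj : ∃ j, e j = (p t).2 - (t.1 + 1) := by
      have : ((p t).2 - (t.1 + 1)) ∈ Set.range e := by
        rw [he, Finset.range_orderEmbOfFin]; exact_mod_cast hvmem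
      exact this
    obtain ⟨j, hj⟩ := hsurj
    refine ⟨i, j, ?_⟩
    have hje := strictMono_le_apply e.strictMono j
    have hbl : bwdLam hp1 hp2 hp4 i j + j.1 = e j := by
      show e j - j.1 + j.1 = e j; omega
    rw [← ht, hbl, hj, gmap, ← hcol]

include h0 hmono hp1 hp2 hp4 in
lemma fwd_bwd : fwd h0 hmono (bwdLam_mono hp1 hp2 hp4) = p := by
  have hmem : ∀ t, gmap p t ∈ Tset (bwdLam hp1 hp2 hp4) := by
    intro t
    rw [Tset_bwd hp1 hp2 hp4]
    exact Finset.mem_image_of_mem _ (Finset.mem_univ t)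
  have huniq : gmap p = ⇑((Tset (bwdLam hp1 hp2 hp4)).orderEmbOfFin
      (card_Tset h0 hmono (bwdLam_mono hp1 hp2 hp4))) :=
    Finset.orderEmbOfFin_unique _ hmem (gmap_strictMono hp1 hp4)
  funext t
  have hrge := r_ge hp1 hp4 t.1 t.2
  have : emb h0 hmono (bwdLam_mono hp1 hp2 hp4) t = gmap p t := by
    rw [emb, ← huniq]
  apply Prod.ext
  · show (ofLex (emb h0 hmono (bwdLam_mono hp1 hp2 hp4) t)).2 = (p t).1
    rw [this]; rfl
  · show (ofLex (emb h0 hmono (bwdLam_mono hp1 hp2 hp4) t)).1 + t.1 + 1 = (p t).2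
    rw [this]
    show (p t).2 - (t.1 + 1) + t.1 + 1 = (p t).2
    have : t.1 + 1 ≤ (p t).2 := by simpa using hrge
    omega

end

end Stmt4Aux

open Stmt4Aux

/-- The bijection underlying the character formula
χ^α_{W(Λ_0)}(q) = q^{Σ n_i² − Σ n_i n_{i+1}} / ((q)_{n_1}(q)_{n_2−n_1}⋯(q)_{n_ℓ−n_{ℓ−1}})
for type A_ℓ with ω = ω_ℓ: tuples of partitions (λ^1,…,λ^ℓ), λ^s of length at most
n_s − n_{s−1}, correspond bijectively to difference-condition-satisfying colored sequences
of length n_ℓ with prescribed color multiplicities, and the total degree of the sequence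
exceeds the total weight of the partitions by Σ n_i² − Σ n_i n_{i+1}. -/
theorem stmt4 (ℓ : ℕ) (hl : 1 ≤ ℓ) (n : ℕ → ℕ) (h0 : n 0 = 0)
    (hmono : ∀ i, i < ℓ → n i ≤ n (i + 1)) :
    ∃ e : {lam : (i : Fin ℓ) → Fin (n (i.1 + 1) - n i.1) → ℕ //
            ∀ i, Monotone (lam i)} ≃
          {p : Fin (n ℓ) → ℕ × ℕ //
            (∀ t, 1 ≤ (p t).1 ∧ (p t).1 ≤ ℓ ∧ 1 ≤ (p t).2) ∧
            (∀ s, 1 ≤ s → s ≤ ℓ →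
              (Finset.univ.filter (fun t => (p t).1 = s)).card = n s - n (s - 1)) ∧
            (∀ t : ℕ, (h : t + 1 < n ℓ) →
              (p ⟨t, Nat.lt_of_succ_lt h⟩).2 < (p ⟨t + 1, h⟩).2 ∨
              ((p ⟨t, Nat.lt_of_succ_lt h⟩).2 = (p ⟨t + 1, h⟩).2 ∧
                (p ⟨t, Nat.lt_of_succ_lt h⟩).1 > (p ⟨t + 1, h⟩).1)) ∧
            (∀ t : ℕ, (h : t + 1 < n ℓ) →
              ((p ⟨t + 1, h⟩).2 : ℤ) - ((p ⟨t, Nat.lt_of_succ_lt h⟩).2 : ℤ) ≥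
                theta (((p ⟨t, Nat.lt_of_succ_lt h⟩).1 : ℤ) - ((p ⟨t + 1, h⟩).1 : ℤ)) + 1)},
      ∀ a, (∑ t, (((e a).1 t).2 : ℤ)) =
        (∑ i, ∑ s, ((a.1 i s : ℤ))) +
        ((∑ i ∈ Finset.Icc 1 ℓ, (n i : ℤ) ^ 2)
          - ∑ i ∈ Finset.Icc 1 (ℓ - 1), (n i : ℤ) * (n (i + 1) : ℤ)) := by
  refine ⟨⟨fun a => ⟨fwd h0 hmono a.2,
      fwd_prop1 h0 hmono a.2,
      fwd_prop2 h0 hmono a.2,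
      fun t h => Or.inl (fwd_prop3 h0 hmono a.2 t h),
      fwd_prop4 h0 hmono a.2⟩,
    fun b => ⟨bwdLam b.2.1 b.2.2.1 b.2.2.2.2,
      bwdLam_mono b.2.1 b.2.2.1 b.2.2.2.2⟩,
    fun a => Subtype.ext (bwd_fwd h0 hmono a.2 (fwd_prop1 h0 hmono a.2) (fwd_prop2 h0 hmono a.2) (fwd_prop4 h0 hmono a.2)),
    fun b => Subtype.ext (fwd_bwd h0 hmono b.2.1 b.2.2.1 b.2.2.2.2)⟩, ?_⟩
  intro a
  show ∑ t, ((fwd h0 hmono a.2 t).2 : ℤ) = _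
  rw [fwd_degree h0 hmono a.2]
  have harith := arith h0 hmono ℓ le_rfl
  rw [Fin.sum_univ_eq_sum_range (fun i => ∑ j ∈ Finset.range (n (i + 1) - n i), (j : ℤ)) ℓ]
  linarith
end

section
/- Let α = n_1 α_1 + … + n_ℓ α_ℓ with integers n_i. Then α can be written as a sum (with nonnegative integer multiplicities) of the roots (ij) = α_i + α_{i+1} + … + α_j, over 1 ≤ i ≤ m and m ≤ j ≤ ℓ, if and only if 0 ≤ n_1 ≤ n_2 ≤ … ≤ n_m and n_m ≥ n_{m+1} ≥ … ≥ n_ℓ ≥ 0. -/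
lemma tele1' (h : ℕ → ℤ) : ∀ a, ∑ i ∈ Finset.Icc 1 a, (h i - h (i-1)) = h a - h 0 := by
  intro a
  induction a with
  | zero => simp
  | succ k ih =>
    rw [show Finset.Icc 1 (k+1) = insert (k+1) (Finset.Icc 1 k) by
      ext x; simp; omega]
    rw [Finset.sum_insert (by simp), ih]
    simp only [Nat.add_sub_cancel]; ring

lemma tele2' (k : ℕ → ℤ) (b : ℕ) : ∀ L, b ≤ L + 1 →
    ∑ j ∈ Finset.Icc b L, (k j - k (j+1)) = k b - k (L+1) := by
  intro L
  induction L with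
  | zero =>
    intro hb
    interval_cases b <;> simp
  | succ M ih =>
    intro hb
    rcases Nat.lt_or_ge M.succ b with h | h
    · have : b = M + 2 := by omega
      subst this
      simp
    · rw [show Finset.Icc b (M+1) = insert (M+1) (Finset.Icc b M) by
        ext x; simp; omega]
      rw [Finset.sum_insert (by simp), ih (by omega)]
      ring

lemma chain_up (f : ℕ → ℤ) (m : ℕ) (h : ∀ i, i < m → f i ≤ f (i+1)) :
    ∀ i i', i' ≤ i → i ≤ m → f i' ≤ f i := by
  intro i
  induction i with
  | zero => intro i' h1 _; interval_cases i'; exact le_refl _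
  | succ k ih =>
    intro i' h1 h2
    rcases Nat.lt_or_ge i' (k+1) with h3 | h3
    · exact le_trans (ih i' (by omega) (by omega)) (h k (by omega))
    · have : i' = k + 1 := by omega
      subst this; exact le_refl _

lemma chain_down (f : ℕ → ℤ) (m L : ℕ) (h : ∀ j, m ≤ j → j < L → f (j+1) ≤ f j) :
    ∀ j j', m ≤ j → j ≤ j' → j' ≤ L → f j' ≤ f j := by
  intro j j' hmj hjj'
  induction j' with
  | zero => intro _; interval_cases j; exact le_refl _
  | succ k ih =>
    intro h2
    rcases Nat.lt_or_ge k.succ j with h3 | h3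
    · omega
    · rcases Nat.lt_or_ge j (k+1) with h4 | h4
      · exact le_trans (h k (by omega) (by omega)) (ih (by omega) (by omega))
      · have : j = k + 1 := by omega
        subst this; exact le_refl _

/-- α = n_1α_1 + … + n_ℓα_ℓ is a nonnegative integer combination of the colors
(ij) = α_i + … + α_j (1 ≤ i ≤ m ≤ j ≤ ℓ) iff 0 ≤ n_1 ≤ … ≤ n_m ≥ … ≥ n_ℓ ≥ 0. -/
theorem stmt7 (ℓ m : ℕ) (hm : 1 ≤ m) (hml : m ≤ ℓ) (n : ℕ → ℤ) :
    (∃ c : ℕ × ℕ → ℕ, ∀ t, 1 ≤ t → t ≤ ℓ →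
        n t = ∑ p ∈ Finset.Icc 1 m ×ˢ Finset.Icc m ℓ,
          (c p : ℤ) * (if p.1 ≤ t ∧ t ≤ p.2 then 1 else 0)) ↔
    (0 ≤ n 1 ∧ (∀ t, 1 ≤ t → t < m → n t ≤ n (t + 1)) ∧
      (∀ t, m ≤ t → t < ℓ → n (t + 1) ≤ n t) ∧ 0 ≤ n ℓ) := by
  constructor
  · rintro ⟨c, hc⟩
    refine ⟨?_, ?_, ?_, ?_⟩
    · rw [hc 1 le_rfl (le_trans hm hml)]
      apply Finset.sum_nonneg
      intro p _
      positivity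
    · intro t ht htm
      rw [hc t ht (by omega), hc (t+1) (by omega) (by omega)]
      apply Finset.sum_le_sum
      intro p hp
      obtain ⟨h1, h2⟩ := Finset.mem_product.mp hp
      rw [Finset.mem_Icc] at h1 h2
      have hind : (if p.1 ≤ t ∧ t ≤ p.2 then (1:ℤ) else 0) ≤
          (if p.1 ≤ t+1 ∧ t+1 ≤ p.2 then (1:ℤ) else 0) := by
        split_ifs <;> omega
      exact mul_le_mul_of_nonneg_left hind (by positivity)
    · intro t htm htl
      rw [hc t (by omega) (by omega), hc (t+1) (by omega) (by omega)]
      apply Finset.sum_le_sum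
      intro p hp
      obtain ⟨h1, h2⟩ := Finset.mem_product.mp hp
      rw [Finset.mem_Icc] at h1 h2
      have hind : (if p.1 ≤ t+1 ∧ t+1 ≤ p.2 then (1:ℤ) else 0) ≤
          (if p.1 ≤ t ∧ t ≤ p.2 then (1:ℤ) else 0) := by
        split_ifs <;> omega
      exact mul_le_mul_of_nonneg_left hind (by positivity)
    · rw [hc ℓ (by omega) le_rfl]
      apply Finset.sum_nonneg
      intro p _
      positivity
  · rintro ⟨h1, h2, h3, h4⟩
    set N : ℕ → ℤ := fun t => if t = 0 ∨ ℓ < t then 0 else n t with hN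
    have hNval : ∀ t, 1 ≤ t → t ≤ ℓ → N t = n t := by
      intro t ht htl
      simp only [hN]
      rw [if_neg (by omega)]
    set F : ℕ → ℕ → ℤ := fun i j => min (N i) (N j) with hF
    have hN0 : N 0 = 0 := by simp [hN]
    have hNl1 : N (ℓ+1) = 0 := by simp [hN]
    -- monotonicity of N
    have hstep1 : ∀ i, i < m → N i ≤ N (i+1) := by
      intro i hi
      have hi1 : N (i+1) = n (i+1) := hNval (i+1) (by omega) (by omega)
      rcases Nat.eq_zero_or_pos i with h | h
      · subst h
        rw [hN0, hi1]
        exact h1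
      · rw [hNval i h (by omega), hi1]
        exact h2 i h hi
    have hup := chain_up N m hstep1
    have hstep2 : ∀ j, m ≤ j → j < ℓ + 1 → N (j+1) ≤ N j := by
      intro j hj hjl
      have hj1 : N j = n j := hNval j (by omega) (by omega)
      rcases Nat.lt_or_ge j ℓ with h | h
      · rw [hNval (j+1) (by omega) (by omega), hj1]
        exact h3 j hj h
      · have : j = ℓ := by omega
        subst this
        rw [hNl1, hj1]
        exact h4
    have hdown := chain_down N m (ℓ+1) hstep2
    have hNnonneg : ∀ t, 0 ≤ N t := by
      intro t
      rcases Nat.lt_or_ge ℓ t with h | h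
      · rcases Nat.eq_zero_or_pos t with h' | h'
        · subst h'; rw [hN0]
        · simp only [hN]
          rw [if_pos (Or.inr h)]
      · rcases Nat.lt_or_ge t m with h' | h'
        · rw [← hN0]; exact hup t 0 (by omega) (by omega)
        · rw [← hNl1]; exact hdown t (ℓ+1) h' (by omega) (by omega)
    -- the coefficient function
    refine ⟨fun p => (F p.1 p.2 - F (p.1-1) p.2 - F p.1 (p.2+1) + F (p.1-1) (p.2+1)).toNat, ?_⟩
    intro t ht htl
    have hcval : ∀ i j, 1 ≤ i → i ≤ m → m ≤ j → j ≤ ℓ →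
        ((F i j - F (i-1) j - F i (j+1) + F (i-1) (j+1)).toNat : ℤ) =
          F i j - F (i-1) j - F i (j+1) + F (i-1) (j+1) := by
      intro i j hi him hmj hjl
      have hx : N (i-1) ≤ N i := hup i (i-1) (by omega) him
      have hy : N (j+1) ≤ N j := hdown j (j+1) hmj (by omega) (by omega)
      have : F (i-1) j + F i (j+1) ≤ F (i-1) (j+1) + F i j := by
        simp only [hF]
        omega
      rw [Int.toNat_of_nonneg (by omega)]
    -- reduce the indicator sum to a rectangle
    have key : ∑ p ∈ Finset.Icc 1 m ×ˢ Finset.Icc m ℓ,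
        (((F p.1 p.2 - F (p.1-1) p.2 - F p.1 (p.2+1) + F (p.1-1) (p.2+1)).toNat : ℤ)) *
          (if p.1 ≤ t ∧ t ≤ p.2 then 1 else 0) =
        ∑ p ∈ Finset.Icc 1 (min t m) ×ˢ Finset.Icc (max t m) ℓ,
          ((F p.1 p.2 - F (p.1-1) p.2 - F p.1 (p.2+1) + F (p.1-1) (p.2+1)).toNat : ℤ) := by
      rw [show (Finset.Icc 1 (min t m) ×ˢ Finset.Icc (max t m) ℓ) =
          (Finset.Icc 1 m ×ˢ Finset.Icc m ℓ).filter (fun p => p.1 ≤ t ∧ t ≤ p.2) by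
        ext ⟨i, j⟩
        simp only [Finset.mem_product, Finset.mem_Icc, Finset.mem_filter]
        omega]
      rw [Finset.sum_filter]
      apply Finset.sum_congr rfl
      intro p _
      split_ifs <;> ring
    rw [key]
    rw [Finset.sum_product]
    have inner : ∀ i ∈ Finset.Icc 1 (min t m),
        ∑ j ∈ Finset.Icc (max t m) ℓ,
          ((F i j - F (i-1) j - F i (j+1) + F (i-1) (j+1)).toNat : ℤ) =
        (F i (max t m) - F (i-1) (max t m)) := by
      intro i hi
      rw [Finset.mem_Icc] at hi
      have : ∑ j ∈ Finset.Icc (max t m) ℓ,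
          ((F i j - F (i-1) j - F i (j+1) + F (i-1) (j+1)).toNat : ℤ) =
          ∑ j ∈ Finset.Icc (max t m) ℓ,
            ((fun j => F i j - F (i-1) j) j - (fun j => F i j - F (i-1) j) (j+1)) := by
        apply Finset.sum_congr rfl
        intro j hj
        rw [Finset.mem_Icc] at hj
        rw [hcval i j (by omega) (by omega) (by omega) (by omega)]
        ring
      rw [this, tele2' (fun j => F i j - F (i-1) j) (max t m) ℓ (by omega)]
      have hfl : ∀ i', F i' (ℓ+1) = 0 := by
        intro i'
        simp only [hF, hNl1]
        exact min_eq_right (hNnonneg i')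
      simp only [hfl]
      ring
    rw [Finset.sum_congr rfl inner]
    have : ∑ i ∈ Finset.Icc 1 (min t m), (F i (max t m) - F (i-1) (max t m)) =
        ∑ i ∈ Finset.Icc 1 (min t m),
          ((fun i => F i (max t m)) i - (fun i => F i (max t m)) (i-1)) := rfl
    rw [this, tele1' (fun i => F i (max t m)) (min t m)]
    have hf0 : F 0 (max t m) = 0 := by
      simp only [hF, hN0]
      exact min_eq_left (hNnonneg _)
    rw [hf0, sub_zero]
    -- F (min t m) (max t m) = n t
    rcases Nat.lt_or_ge t m with h | h
    · rw [min_eq_left (by omega), max_eq_right (by omega)]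
      simp only [hF]
      rw [min_eq_left (hup m t (by omega) le_rfl), hNval t ht htl]
    · rw [min_eq_right (by omega), max_eq_left (by omega)]
      simp only [hF]
      rw [min_eq_right (hdown m t le_rfl h (by omega)), hNval t ht htl]
end

section
/- Let α = n_1α_1 + n_2α_2 + n_3α_3 + n_4α_4 with integer coefficients. Then α is expressible as a nonnegative integer combination of the six D_4 colors 2̲ = α_1, 3̲ = α_1+α_2, 4̲ = α_1+α_2+α_3, 4 = α_1+α_2+α_4, 3 = α_1+α_2+α_3+α_4, 2 = α_1+2α_2+α_3+α_4, if and only if all eight inequalities hold: n_1−n_2+n_4 ≥ 0, n_1−n_2+n_3 ≥ 0, n_2−n_3 ≥ 0, n_1−n_3 ≥ 0, n_3 ≥ 0, n_2−n_4 ≥ 0, n_4 ≥ 0, n_1−n_4 ≥ 0. -/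
/-- α = n_1α_1+n_2α_2+n_3α_3+n_4α_4 is a nonnegative integer combination of the six
D_4 colors 2̲ = α_1, 3̲ = α_1+α_2, 4̲ = α_1+α_2+α_3, 4 = α_1+α_2+α_4,
3 = α_1+α_2+α_3+α_4, 2 = α_1+2α_2+α_3+α_4 iff the eight inequalities hold. -/
theorem stmt12 (n1 n2 n3 n4 : ℤ) :
    (∃ m2 m3 m4 c4 c3 c2 : ℕ,
      n1 = m2 + m3 + m4 + c4 + c3 + c2 ∧
      n2 = m3 + m4 + c4 + c3 + 2 * c2 ∧
      n3 = m4 + c3 + c2 ∧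
      n4 = c4 + c3 + c2) ↔
    (n1 - n2 + n4 ≥ 0 ∧ n1 - n2 + n3 ≥ 0 ∧ n2 - n3 ≥ 0 ∧ n1 - n3 ≥ 0 ∧
      n3 ≥ 0 ∧ n2 - n4 ≥ 0 ∧ n4 ≥ 0 ∧ n1 - n4 ≥ 0) := by
  constructor
  · rintro ⟨m2, m3, m4, c4, c3, c2, h1, h2, h3, h4⟩
    omega
  · intro h
    set C3 : ℤ := max 0 (n3 + n4 - n2) with hC3
    set C2 : ℤ := max 0 (n2 - n1) with hC2
    refine ⟨(n1 - n2 + C2).toNat, (n2 - n3 - n4 + C3).toNat, (n3 - C3 - C2).toNat,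
      (n4 - C3 - C2).toNat, C3.toNat, C2.toNat, ?_, ?_, ?_, ?_⟩ <;> omega
end

section
/- For integers n ≥ m ≥ 0, identify the two-color alphabet {3̲, 3} with {(2), (1)} from type A_2 with ω = ω_2. Then the generating function χ_{Γ''}^{α''}(q) over sequences ((γ_1, r_1), …, (γ_{n}, r_{n})) with colors in {3̲, 3}, exactly m occurrences of 3, r_1 ≥ 1, and differences r_{t+1} − r_t ≥ 1 + θ(γ_{t+1} ≥ γ_t) (θ = 1 if the inequality in the order 3 > 3̲ holds, else 0), graded by q^{r_1+…+r_n}, equals q^{n² + m² − nm} / ((q)_m (q)_{n−m}). -/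
open PowerSeries Finset

namespace Stmt18

noncomputable section

abbrev PS := PowerSeries ℚ

def Pprod (j : ℕ) : PS := ∏ t ∈ Finset.range j, (1 - (PowerSeries.X : PS) ^ (t+1))

def wext {n : ℕ} (w : Fin n → Fin 2) (j : ℕ) : Fin 2 := if h : j < n then w ⟨j, h⟩ else 0

def dlt {n : ℕ} (w : Fin n → Fin 2) (j : ℕ) : ℕ := 1 + if wext w j ≤ wext w (j+1) then 1 else 0

def base {n : ℕ} (w : Fin n → Fin 2) (t : Fin n) : ℕ := 1 + ∑ j ∈ Finset.range t.val, dlt w j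

def swt {n : ℕ} (w : Fin n → Fin 2) : ℕ := ∑ t, base w t

def cnt {n : ℕ} (w : Fin n → Fin 2) : ℕ := (Finset.univ.filter (fun t => w t = 1)).card

lemma base_zero {n : ℕ} (w : Fin n → Fin 2) (h : 0 < n) : base w ⟨0, h⟩ = 1 := by
  simp [base]

lemma base_succ {n : ℕ} (w : Fin n → Fin 2) (t : ℕ) (h : t + 1 < n) :
    base w ⟨t+1, h⟩ = base w ⟨t, Nat.lt_of_succ_lt h⟩ + dlt w t := by
  simp [base, Finset.sum_range_succ]; ring

lemma dlt_eq {n : ℕ} (w : Fin n → Fin 2) (t : ℕ) (h : t + 1 < n) :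
    dlt w t = 1 + if w ⟨t, Nat.lt_of_succ_lt h⟩ ≤ w ⟨t+1, h⟩ then 1 else 0 := by
  rw [dlt, wext, wext, dif_pos (Nat.lt_of_succ_lt h), dif_pos h]

lemma mono_of_adj {n : ℕ} {f : Fin n → ℕ}
    (h : ∀ (t : ℕ) (ht : t + 1 < n), f ⟨t, Nat.lt_of_succ_lt ht⟩ ≤ f ⟨t+1, ht⟩) :
    Monotone f := by
  have key : ∀ (d : ℕ) (i : ℕ) (hi : i < n) (h2 : i + d < n), f ⟨i, hi⟩ ≤ f ⟨i + d, h2⟩ := by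
    intro d
    induction d with
    | zero => intro i hi h2; exact le_of_eq (congrArg f (Fin.ext rfl))
    | succ d ih =>
      intro i hi h2
      have h3 : i + d < n := by omega
      refine (ih i hi h3).trans ?_
      have := h (i + d) (by omega : i + d + 1 < n)
      exact le_of_le_of_eq this (congrArg f (Fin.ext (by simp; omega)))
  intro i j hij
  have := key (j.val - i.val) i.val i.isLt (by omega)
  exact le_of_le_of_eq this (congrArg f (Fin.ext (by simp; omega)))

lemma adj_of_mono {n : ℕ} {f : Fin n → ℕ} (hf : Monotone f) (t : ℕ) (ht : t + 1 < n) :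
    f ⟨t, Nat.lt_of_succ_lt ht⟩ ≤ f ⟨t+1, ht⟩ := hf (by simp [Fin.le_def])

lemma wext_cons_zero {n : ℕ} (a : Fin 2) (w : Fin n → Fin 2) :
    wext (Fin.cons a w) 0 = a := by
  rw [wext, dif_pos (Nat.succ_pos n)]; rfl

lemma wext_cons_succ {n : ℕ} (a : Fin 2) (w : Fin n → Fin 2) (j : ℕ) :
    wext (Fin.cons a w) (j+1) = wext w j := by
  unfold wext
  by_cases h : j < n
  · rw [dif_pos (by omega : j + 1 < n + 1), dif_pos h]
    have e : (⟨j + 1, by omega⟩ : Fin (n+1)) = Fin.succ ⟨j, h⟩ := rfl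
    rw [e, Fin.cons_succ]
  · rw [dif_neg (by omega), dif_neg h]

lemma dlt_cons_succ {n : ℕ} (a : Fin 2) (w : Fin n → Fin 2) (j : ℕ) :
    dlt (Fin.cons a w) (j+1) = dlt w j := by
  rw [dlt, dlt, wext_cons_succ, wext_cons_succ]

lemma dlt_cons_zero {n : ℕ} (a : Fin 2) (w : Fin n → Fin 2) :
    dlt (Fin.cons a w) 0 = 1 + if a ≤ wext w 0 then 1 else 0 := by
  rw [dlt, wext_cons_zero, show (0+1 : ℕ) = 0 + 1 from rfl, wext_cons_succ]

lemma base_cons_succ {n : ℕ} (a : Fin 2) (w : Fin n → Fin 2) (t : Fin n) :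
    base (Fin.cons a w) t.succ = base w t + dlt (Fin.cons a w) 0 := by
  rw [base, base]
  have : (t.succ : Fin (n+1)).val = t.val + 1 := rfl
  rw [this, Finset.sum_range_succ']
  simp only [dlt_cons_succ]
  ring

lemma swt_cons {n : ℕ} (a : Fin 2) (w : Fin n → Fin 2) :
    swt (Fin.cons a w) = swt w + (n+1) + n * (if a ≤ wext w 0 then 1 else 0) := by
  rw [swt, Fin.sum_univ_succ]
  simp only [base_cons_succ]
  rw [Finset.sum_add_distrib, Finset.sum_const, Finset.card_univ, Fintype.card_fin]
  have h0 : base (Fin.cons a w) 0 = 1 := by simp [base]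
  rw [h0, ← swt, dlt_cons_zero]
  ring

lemma cnt_cons {n : ℕ} (a : Fin 2) (w : Fin n → Fin 2) :
    cnt (Fin.cons a w) = (if a = 1 then 1 else 0) + cnt w := by
  rw [cnt, cnt, Finset.card_filter, Finset.card_filter, Fin.sum_univ_succ]
  simp [Fin.cons_succ]


instance fin_shift (n k s : ℕ) : Finite {y : Fin n → ℕ // Monotone y ∧ (∑ t, y t) + s = k} := by
  refine Finite.of_injective (fun y => (fun t => (⟨y.1 t, ?_⟩ : Fin (k+1)))) ?_
  · have h1 : y.1 t ≤ ∑ u, y.1 u := Finset.single_le_sum (fun i _ => Nat.zero_le _) (mem_univ t)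
    have := y.2.2
    omega
  · intro a b hab
    ext t
    exact congrArg Fin.val (congrFun hab t)

instance fin_eq (n k : ℕ) : Finite {y : Fin n → ℕ // Monotone y ∧ (∑ t, y t) = k} :=
  Finite.of_equiv {y : Fin n → ℕ // Monotone y ∧ (∑ t, y t) + 0 = k}
    (Equiv.subtypeEquivRight (fun y => by rw [add_zero]))

def Mcount (n k : ℕ) : ℕ := Nat.card {y : Fin n → ℕ // Monotone y ∧ ∑ t, y t = k}

def Mser (n : ℕ) : PS := PowerSeries.mk fun k => (Mcount n k : ℚ)

lemma Mcount_zero (k : ℕ) : Mcount 0 k = if k = 0 then 1 else 0 := by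
  rcases eq_or_ne k 0 with rfl | hk
  · rw [if_pos rfl, Mcount]
    haveI : Unique {y : Fin 0 → ℕ // Monotone y ∧ ∑ t, y t = 0} :=
      ⟨⟨⟨fun t => t.elim0, fun a => a.elim0, by simp⟩⟩, by
        rintro ⟨y, hy⟩; ext t; exact t.elim0⟩
    exact Nat.card_unique
  · rw [if_neg hk, Mcount]
    haveI : IsEmpty {y : Fin 0 → ℕ // Monotone y ∧ ∑ t, y t = k} := by
      constructor; rintro ⟨y, hy, hs⟩
      simp at hs; omega
    exact Nat.card_of_isEmpty

lemma mono_cons_zero {n : ℕ} {z : Fin n → ℕ} (hz : Monotone z) :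
    Monotone (Fin.cons 0 z : Fin (n+1) → ℕ) := by
  intro a b hab
  induction a using Fin.cases with
  | zero => simp
  | succ a' =>
    induction b using Fin.cases with
    | zero => exact absurd hab (by simp [Fin.le_def])
    | succ b' =>
      rw [Fin.cons_succ, Fin.cons_succ]
      exact hz (by rwa [Fin.succ_le_succ_iff] at hab)

lemma mono_tail {n : ℕ} {y : Fin (n+1) → ℕ} (hy : Monotone y) : Monotone (Fin.tail y) := by
  intro a b hab
  exact hy (by rwa [Fin.succ_le_succ_iff])

/-- The key recursion equivalence. -/
def mrecEquiv (n k : ℕ) :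
    {y : Fin (n+1) → ℕ // Monotone y ∧ ∑ t, y t = k} ≃
      {y : Fin n → ℕ // Monotone y ∧ ∑ t, y t = k} ⊕
      {y : Fin (n+1) → ℕ // Monotone y ∧ (∑ t, y t) + (n+1) = k} where
  toFun p :=
    if h : p.1 0 = 0 then
      Sum.inl ⟨Fin.tail p.1, mono_tail p.2.1, by
        have := p.2.2
        rw [Fin.sum_univ_succ, h, zero_add] at this
        simpa [Fin.tail] using this⟩
    else
      Sum.inr ⟨fun t => p.1 t - 1, by
        intro a b hab
        show p.1 a - 1 ≤ p.1 b - 1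
        have h1 : 1 ≤ p.1 a := by
          have := p.2.1 (Fin.zero_le a); omega
        have := p.2.1 hab
        omega, by
        show (∑ t, (p.1 t - 1)) + (n+1) = k
        have hge : ∀ t, 1 ≤ p.1 t := fun t => by
          have := p.2.1 (Fin.zero_le t); omega
        have : ∑ t, (p.1 t - 1) + ∑ t : Fin (n+1), 1 = ∑ t, p.1 t := by
          rw [← Finset.sum_add_distrib]
          exact Finset.sum_congr rfl fun t _ => by have := hge t; omega
        simp only [Finset.sum_const, Finset.card_univ, Fintype.card_fin, smul_eq_mul, mul_one] at this
        have := p.2.2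
        omega⟩
  invFun q :=
    match q with
    | Sum.inl ⟨z, hz⟩ => ⟨Fin.cons 0 z, mono_cons_zero hz.1, by
        rw [Fin.sum_univ_succ, Fin.cons_zero, zero_add]
        simpa [Fin.cons_succ] using hz.2⟩
    | Sum.inr ⟨y, hy⟩ => ⟨fun t => y t + 1,
        fun a b hab => by show y a + 1 ≤ y b + 1; have := hy.1 hab; omega, by
        show (∑ t, (y t + 1)) = k
        rw [Finset.sum_add_distrib]
        simp only [Finset.sum_const, Finset.card_univ, Fintype.card_fin, smul_eq_mul, mul_one]
        have := hy.2
        omega⟩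
  left_inv p := by
    by_cases h : p.1 0 = 0
    · simp only [dif_pos h]
      ext t
      induction t using Fin.cases with
      | zero => simp [h]
      | succ t' => simp [Fin.cons_succ, Fin.tail]
    · simp only [dif_neg h]
      ext t
      have : 1 ≤ p.1 t := by have := p.2.1 (Fin.zero_le t); omega
      simp only
      omega
  right_inv q := by
    match q with
    | Sum.inl ⟨z, hz⟩ =>
      simp only [dif_pos (show (Fin.cons (0:ℕ) z : Fin (n+1) → ℕ) 0 = 0 from rfl)]
      refine congrArg Sum.inl (Subtype.ext ?_)
      funext t
      simp [Fin.tail]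
    | Sum.inr ⟨y, hy⟩ =>
      simp only [dif_neg (show ¬(y 0 + 1 = 0) by omega)]
      refine congrArg Sum.inr (Subtype.ext ?_)
      funext t
      show y t + 1 - 1 = y t
      omega

lemma Mcount_succ (n k : ℕ) :
    Mcount (n+1) k = Mcount n k + (if n+1 ≤ k then Mcount (n+1) (k - (n+1)) else 0) := by
  rw [Mcount, Nat.card_congr (mrecEquiv n k), Nat.card_sum]
  congr 1
  by_cases h : n + 1 ≤ k
  · rw [if_pos h, Mcount]
    exact Nat.card_congr (Equiv.subtypeEquivRight (fun y => by
      constructor <;> rintro ⟨h1, h2⟩ <;> exact ⟨h1, by omega⟩))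
  · rw [if_neg h]
    haveI : IsEmpty {y : Fin (n+1) → ℕ // Monotone y ∧ (∑ t, y t) + (n+1) = k} := by
      constructor; rintro ⟨y, hy, hs⟩; omega
    exact Nat.card_of_isEmpty

lemma Mser_zero : Mser 0 = 1 := by
  ext k
  rw [Mser, coeff_mk, Mcount_zero]
  rcases eq_or_ne k 0 with rfl | hk
  · simp
  · simp [hk, coeff_one]

lemma Mser_succ_mul (n : ℕ) : Mser (n+1) * (1 - X^(n+1)) = Mser n := by
  ext k
  rw [mul_sub, mul_one, map_sub, coeff_mul_X_pow']
  simp only [Mser, coeff_mk]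
  have := Mcount_succ n k
  by_cases h : n + 1 ≤ k
  · rw [if_pos h] at this ⊢
    rw [this]; push_cast; ring
  · rw [if_neg h] at this ⊢
    rw [this]; push_cast; ring

lemma Mser_mul_Pprod (n : ℕ) : Mser n * Pprod n = 1 := by
  induction n with
  | zero => simp [Mser_zero, Pprod]
  | succ n ih =>
    rw [Pprod, Finset.prod_range_succ, ← Pprod, ← mul_assoc, mul_comm (Mser (n+1)) (Pprod n),
      mul_assoc, Mser_succ_mul, mul_comm]
    exact ih

def Uw (n m : ℕ) : PS :=
  ∑ w ∈ Finset.univ.filter (fun w : Fin n → Fin 2 => cnt w = m), (PowerSeries.X : PS) ^ swt w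
def Bw (n m : ℕ) : PS :=
  ∑ w ∈ Finset.univ.filter (fun w : Fin n → Fin 2 => cnt w = m ∧ wext w 0 = 1),
    (PowerSeries.X : PS) ^ swt w

lemma sum_words {M : Type*} [AddCommMonoid M] {n : ℕ} (F : (Fin (n+1) → Fin 2) → M) :
    ∑ w : Fin (n+1) → Fin 2, F w
      = (∑ w' : Fin n → Fin 2, F (Fin.cons 0 w')) + (∑ w' : Fin n → Fin 2, F (Fin.cons 1 w')) := by
  rw [← Equiv.sum_comp (Fin.consEquiv (fun _ => Fin 2)) F, Fintype.sum_prod_type,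
    Fin.sum_univ_two]
  rfl

lemma cnt_le {n : ℕ} (w : Fin n → Fin 2) : cnt w ≤ n := by
  calc cnt w ≤ Finset.univ.card := Finset.card_filter_le _ _
  _ = n := by simp

lemma Uw_gt (n m : ℕ) (h : n < m) : Uw n m = 0 := by
  rw [Uw]
  apply Finset.sum_eq_zero
  intro w hw
  simp only [Finset.mem_filter] at hw
  have := cnt_le w
  omega

lemma Bw_zero (n : ℕ) : Bw n 0 = 0 := by
  rw [Bw]
  apply Finset.sum_eq_zero
  intro w hw
  simp only [Finset.mem_filter] at hw
  obtain ⟨-, hc, h1⟩ := hw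
  rcases n.eq_zero_or_pos with rfl | hn
  · rw [wext] at h1; simp at h1
  · rw [wext, dif_pos hn] at h1
    have : (⟨0, hn⟩ : Fin n) ∈ Finset.univ.filter (fun t => w t = 1) := by
      simp [h1]
    rw [cnt, Finset.card_eq_zero] at hc
    rw [hc] at this
    exact absurd this (Finset.notMem_empty _)

lemma Uw_zero_zero : Uw 0 0 = 1 := by
  rw [Uw]
  have h1 : (Finset.univ.filter (fun w : Fin 0 → Fin 2 => cnt w = 0)) = Finset.univ := by
    apply Finset.filter_true_of_mem
    intro w _
    have := cnt_le w; omega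
  rw [h1]
  have h2 : (Finset.univ : Finset (Fin 0 → Fin 2)) = {fun t => t.elim0} := by
    apply Finset.eq_singleton_iff_unique_mem.mpr
    refine ⟨Finset.mem_univ _, fun w _ => funext fun t => t.elim0⟩
  rw [h2, Finset.sum_singleton]
  have h3 : swt (fun t : Fin 0 => t.elim0) = 0 := by simp [swt]
  rw [h3, pow_zero]

lemma Uw_filter (n m : ℕ) :
    Uw n m = ∑ w : Fin n → Fin 2, if cnt w = m then (X : PS) ^ swt w else 0 :=
  Finset.sum_filter _ _

lemma Bw_filter (n m : ℕ) :
    Bw n m = ∑ w : Fin n → Fin 2,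
      if cnt w = m ∧ wext w 0 = 1 then (X : PS) ^ swt w else 0 :=
  Finset.sum_filter _ _

lemma fin2_one_le : ∀ x : Fin 2, ((1 : Fin 2) ≤ x) ↔ x = 1 := by decide

lemma Bw_cons (n m : ℕ) :
    Bw (n+1) m = ∑ w' : Fin n → Fin 2,
      (if cnt (Fin.cons 1 w') = m then (X : PS) ^ swt (Fin.cons 1 w') else 0) := by
  rw [Bw_filter, sum_words]
  have h0 : ∀ w' : Fin n → Fin 2,
      (if cnt (Fin.cons 0 w') = m ∧ wext (Fin.cons (0 : Fin 2) w') 0 = 1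
        then (X : PS) ^ swt (Fin.cons 0 w') else 0) = 0 := by
    intro w'
    refine if_neg ?_
    rw [wext_cons_zero]
    rintro ⟨-, h⟩
    exact absurd h (by decide)
  have h1 : ∀ w' : Fin n → Fin 2,
      (if cnt (Fin.cons 1 w') = m ∧ wext (Fin.cons (1 : Fin 2) w') 0 = 1
        then (X : PS) ^ swt (Fin.cons 1 w') else 0)
      = (if cnt (Fin.cons 1 w') = m then (X : PS) ^ swt (Fin.cons 1 w') else 0) := by
    intro w'
    rw [wext_cons_zero]
    exact if_congr (by simp) rfl rfl
  rw [Finset.sum_congr rfl (fun w' _ => h0 w'), Finset.sum_congr rfl (fun w' _ => h1 w')]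
  simp

lemma Uw_decomp (n m : ℕ) :
    Uw (n+1) m = X ^ (2*n+1) * Uw n m + Bw (n+1) m := by
  rw [Uw_filter, sum_words, Bw_cons]
  congr 1
  have hA : ∀ w' : Fin n → Fin 2,
      (if cnt (Fin.cons 0 w') = m then (X : PS) ^ swt (Fin.cons 0 w') else 0)
      = X ^ (2*n+1) * (if cnt w' = m then (X : PS) ^ swt w' else 0) := by
    intro w'
    rw [cnt_cons, swt_cons, if_neg (show ¬((0:Fin 2) = 1) by decide),
      if_pos (Fin.zero_le _)]
    by_cases h : cnt w' = m
    · rw [if_pos (by omega : 0 + cnt w' = m), if_pos h, ← pow_add]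
      congr 1
      ring
    · rw [if_neg (by omega), if_neg h, mul_zero]
  rw [Finset.sum_congr rfl (fun w' _ => hA w'), ← Finset.mul_sum, Uw_filter]

lemma UB_diff (n j : ℕ) :
    Uw n j - Bw n j = ∑ w : Fin n → Fin 2,
      if cnt w = j ∧ ¬ wext w 0 = 1 then (X : PS) ^ swt w else 0 := by
  rw [sub_eq_iff_eq_add, Uw_filter, Bw_filter, ← Finset.sum_add_distrib]
  refine Finset.sum_congr rfl fun w _ => ?_
  by_cases h1 : cnt w = j <;> by_cases h2 : wext w 0 = 1 <;> simp [h1, h2]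

lemma Bw_decomp (n m : ℕ) (hm : 1 ≤ m) :
    Bw (n+1) m = X ^ (2*n+1) * Bw n (m-1) + X ^ (n+1) * (Uw n (m-1) - Bw n (m-1)) := by
  rw [Bw_cons, UB_diff]
  have key : ∀ w' : Fin n → Fin 2,
      (if cnt (Fin.cons 1 w') = m then (X : PS) ^ swt (Fin.cons 1 w') else 0)
      = X ^ (2*n+1) * (if cnt w' = m-1 ∧ wext w' 0 = 1 then (X : PS) ^ swt w' else 0)
        + X ^ (n+1) * (if cnt w' = m-1 ∧ ¬ wext w' 0 = 1 then (X : PS) ^ swt w' else 0) := by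
    intro w'
    rw [cnt_cons, swt_cons, if_pos (show (1:Fin 2) = 1 from rfl)]
    rcases eq_or_ne (wext w' 0) 1 with h2 | h2
    · rw [if_pos ((fin2_one_le _).mpr h2)]
      by_cases h1 : cnt w' = m - 1
      · rw [if_pos (show 1 + cnt w' = m by omega), if_pos ⟨h1, h2⟩, if_neg (by tauto),
          mul_zero, add_zero, ← pow_add]
        congr 1
        ring
      · rw [if_neg (show ¬(1 + cnt w' = m) by omega), if_neg (by tauto), if_neg (by tauto),
          mul_zero, mul_zero, add_zero]
    · rw [if_neg (fun hh => h2 ((fin2_one_le _).mp hh))]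
      by_cases h1 : cnt w' = m - 1
      · rw [if_pos (show 1 + cnt w' = m by omega), if_neg (by tauto), if_pos ⟨h1, h2⟩]
        simp only [mul_zero, zero_add, ← pow_add]
        congr 1
        ring
      · rw [if_neg (show ¬(1 + cnt w' = m) by omega), if_neg (by tauto), if_neg (by tauto),
          mul_zero, mul_zero, add_zero]
  rw [Finset.sum_congr rfl (fun w' _ => key w'), Finset.sum_add_distrib, ← Finset.mul_sum,
    ← Finset.mul_sum, ← Bw_filter]

lemma Pprod_succ (j : ℕ) : Pprod (j+1) = Pprod j * (1 - (X : PS) ^ (j+1)) :=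
  Finset.prod_range_succ _ _

lemma main_UB (N : ℕ) :
    (∀ a b, a + b = N → Uw N a * Pprod a * Pprod b = X ^ (a*a+a*b+b*b) * Pprod N) ∧
    (∀ c b, c + b = N →
      Bw (N+1) (c+1) * Pprod c * Pprod b
        = X ^ ((c+1)*(c+1)+(c+1)*b+b*b) * Pprod N) := by
  induction N with
  | zero =>
    constructor
    · rintro a b hab
      obtain ⟨rfl, rfl⟩ : a = 0 ∧ b = 0 := by omega
      simp [Uw_zero_zero, Pprod]
    · rintro c b hcb
      obtain ⟨rfl, rfl⟩ : c = 0 ∧ b = 0 := by omega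
      have hd := Bw_decomp 0 1 le_rfl
      simp only [Nat.sub_self] at hd
      rw [hd, Bw_zero, Uw_zero_zero]
      simp only [Pprod, Finset.range_zero, Finset.prod_empty]
      ring
  | succ N ih =>
    obtain ⟨ihU, ihB⟩ := ih
    have hUnew : ∀ a b, a + b = N + 1 →
        Uw (N+1) a * Pprod a * Pprod b = X ^ (a*a+a*b+b*b) * Pprod (N+1) := by
      rintro a b hab
      rcases a.eq_zero_or_pos with rfl | ha
      · obtain rfl : b = N + 1 := by omega
        have hd := Uw_decomp N 0
        have hU := ihU 0 N (by omega)
        rw [hd, Bw_zero, add_zero, Pprod_succ N]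
        linear_combination (X^(2*N+1) * (1 - (X:PS)^(N+1))) * hU
      · obtain ⟨a', rfl⟩ : ∃ a', a = a' + 1 := ⟨a - 1, by omega⟩
        rcases b.eq_zero_or_pos with rfl | hb
        · obtain rfl : a' = N := by omega
          have hd := Uw_decomp a' (a'+1)
          have hB := ihB a' 0 (by omega)
          rw [hd, Uw_gt a' (a'+1) (by omega), mul_zero, zero_add, Pprod_succ a']
          linear_combination (1 - (X:PS)^(a'+1)) * hB
        · obtain ⟨b', rfl⟩ : ∃ b', b = b' + 1 := ⟨b - 1, by omega⟩
          obtain rfl : N = a' + 1 + b' := by omega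
          have hd := Uw_decomp (a'+1+b') (a'+1)
          have hU := ihU (a'+1) b' (by omega)
          have hB := ihB a' (b'+1) (by omega)
          rw [hd, Pprod_succ b', Pprod_succ (a'+1+b'), Pprod_succ a']
          rw [Pprod_succ a'] at hU
          rw [Pprod_succ b'] at hB
          linear_combination (X^(2*(a'+1+b')+1) * (1 - (X:PS)^(b'+1))) * hU
            + (1 - (X:PS)^(a'+1)) * hB
    refine ⟨hUnew, ?_⟩
    rintro c b hcb
    rcases c.eq_zero_or_pos with rfl | hc
    · obtain rfl : b = N + 1 := by omega
      have hd := Bw_decomp (N+1) 1 le_rfl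
      simp only [Nat.sub_self] at hd
      have hU := hUnew 0 (N+1) (by omega)
      rw [hd, Bw_zero, mul_zero, zero_add, sub_zero]
      linear_combination (X:PS)^(N+1+1) * hU
    · obtain ⟨c', rfl⟩ : ∃ c', c = c' + 1 := ⟨c - 1, by omega⟩
      obtain rfl : N = c' + b := by omega
      have hd := Bw_decomp (c'+b+1) (c'+1+1) (by omega)
      simp only [Nat.add_sub_cancel] at hd
      have hU := hUnew (c'+1) b (by omega)
      have hB := ihB c' b (by omega)
      rw [hd, Pprod_succ c', Pprod_succ (c'+b)]
      rw [Pprod_succ c', Pprod_succ (c'+b)] at hU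
      linear_combination (X:PS)^(c'+b+2) * hU
        + ((X^(2*(c'+b+1)+1) - (X:PS)^(c'+b+2)) * (1 - (X:PS)^(c'+1))) * hB

/-- the conditions from the theorem statement -/
def Pcond (n m k : ℕ) (p : (Fin n → Fin 2) × (Fin n → ℕ)) : Prop :=
  (Finset.univ.filter (fun t => p.1 t = 1)).card = m ∧
  (∀ h : 0 < n, 1 ≤ p.2 ⟨0, h⟩) ∧
  (∀ t : ℕ, (h : t + 1 < n) →
    p.2 ⟨t + 1, h⟩ ≥ p.2 ⟨t, Nat.lt_of_succ_lt h⟩ + 1 +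
      (if p.1 ⟨t, Nat.lt_of_succ_lt h⟩ ≤ p.1 ⟨t + 1, h⟩ then 1 else 0)) ∧
  (∑ t, p.2 t) = k

def Qcond (n m k : ℕ) (p : (Fin n → Fin 2) × (Fin n → ℕ)) : Prop :=
  cnt p.1 = m ∧ Monotone p.2 ∧ (∑ t, p.2 t) + swt p.1 = k

lemma base_le {n m k : ℕ} {p : (Fin n → Fin 2) × (Fin n → ℕ)} (hp : Pcond n m k p) :
    ∀ t : Fin n, base p.1 t ≤ p.2 t := by
  obtain ⟨-, h0, hstep, -⟩ := hp
  have key : ∀ (j : ℕ) (hj : j < n), base p.1 ⟨j, hj⟩ ≤ p.2 ⟨j, hj⟩ := by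
    intro j
    induction j with
    | zero => intro hj; rw [base_zero]; exact h0 hj
    | succ j ih =>
      intro hj
      have hj' : j < n := Nat.lt_of_succ_lt hj
      have h1 := ih hj'
      have h2 := hstep j hj
      rw [base_succ p.1 j hj, dlt_eq p.1 j hj]
      generalize (if p.1 ⟨j, Nat.lt_of_succ_lt hj⟩ ≤ p.1 ⟨j + 1, hj⟩ then 1 else 0) = e at h2 ⊢
      omega
  intro t
  have := key t.val t.isLt
  convert this using 2

/-- the shear equivalence -/
def shearEquiv (n m k : ℕ) :
    {p : (Fin n → Fin 2) × (Fin n → ℕ) // Pcond n m k p} ≃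
    {p : (Fin n → Fin 2) × (Fin n → ℕ) // Qcond n m k p} where
  toFun p := ⟨(p.1.1, fun t => p.1.2 t - base p.1.1 t), by
    have hle := base_le p.2
    have hcnt := p.2.1
    have hstep := p.2.2.2.1
    have hsum := p.2.2.2.2
    refine ⟨hcnt, ?_, ?_⟩
    · apply mono_of_adj
      intro t ht
      show p.1.2 ⟨t, Nat.lt_of_succ_lt ht⟩ - base p.1.1 ⟨t, Nat.lt_of_succ_lt ht⟩ ≤
        p.1.2 ⟨t+1, ht⟩ - base p.1.1 ⟨t+1, ht⟩
      have h1 := hstep t ht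
      have h2 := base_succ p.1.1 t ht
      have h3 := hle ⟨t, Nat.lt_of_succ_lt ht⟩
      have h4 := hle ⟨t+1, ht⟩
      rw [dlt_eq p.1.1 t ht] at h2
      generalize (if p.1.1 ⟨t, Nat.lt_of_succ_lt ht⟩ ≤ p.1.1 ⟨t + 1, ht⟩ then 1 else 0) = e
        at h1 h2
      omega
    · show (∑ t, (p.1.2 t - base p.1.1 t)) + swt p.1.1 = k
      rw [swt, ← Finset.sum_add_distrib]
      have he : ∀ x ∈ Finset.univ, p.1.2 x - base p.1.1 x + base p.1.1 x = p.1.2 x :=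
        fun x _ => by have := hle x; omega
      rw [Finset.sum_congr rfl he]
      exact hsum⟩
  invFun q := ⟨(q.1.1, fun t => q.1.2 t + base q.1.1 t), by
    have hcnt := q.2.1
    have hmono := q.2.2.1
    have hsum := q.2.2.2
    refine ⟨hcnt, ?_, ?_, ?_⟩
    · intro h
      show 1 ≤ q.1.2 ⟨0, h⟩ + base q.1.1 ⟨0, h⟩
      rw [base_zero q.1.1 h]
      omega
    · intro t ht
      show q.1.2 ⟨t+1, ht⟩ + base q.1.1 ⟨t+1, ht⟩ ≥
        q.1.2 ⟨t, Nat.lt_of_succ_lt ht⟩ + base q.1.1 ⟨t, Nat.lt_of_succ_lt ht⟩ + 1 +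
          (if q.1.1 ⟨t, Nat.lt_of_succ_lt ht⟩ ≤ q.1.1 ⟨t + 1, ht⟩ then 1 else 0)
      have h2 := base_succ q.1.1 t ht
      have h3 := adj_of_mono hmono t ht
      rw [dlt_eq q.1.1 t ht] at h2
      generalize (if q.1.1 ⟨t, Nat.lt_of_succ_lt ht⟩ ≤ q.1.1 ⟨t + 1, ht⟩ then 1 else 0) = e
        at h2 ⊢
      omega
    · show (∑ t, (q.1.2 t + base q.1.1 t)) = k
      rw [Finset.sum_add_distrib, ← swt]
      exact hsum⟩
  left_inv p := by
    have hle := base_le p.2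
    apply Subtype.ext
    show ((p.1.1, fun t => p.1.2 t - base p.1.1 t + base p.1.1 t) : _ × _) = p.1
    refine Prod.ext rfl (funext fun t => ?_)
    show p.1.2 t - base p.1.1 t + base p.1.1 t = p.1.2 t
    have := hle t
    omega
  right_inv q := by
    apply Subtype.ext
    show ((q.1.1, fun t => q.1.2 t + base q.1.1 t - base q.1.1 t) : _ × _) = q.1
    refine Prod.ext rfl (funext fun t => ?_)
    show q.1.2 t + base q.1.1 t - base q.1.1 t = q.1.2 t
    omega

lemma nat_card_sigma {ι : Type*} [Fintype ι] (f : ι → Type*) [∀ i, Finite (f i)] :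
    Nat.card ((i : ι) × f i) = ∑ i, Nat.card (f i) := by
  letI : ∀ i, Fintype (f i) := fun i => Fintype.ofFinite _
  simp [Nat.card_eq_fintype_card, Fintype.card_sigma]

instance fib_finite (n m k : ℕ) (w : Fin n → Fin 2) :
    Finite {y : Fin n → ℕ // cnt w = m ∧ Monotone y ∧ (∑ t, y t) + swt w = k} := by
  refine Finite.of_injective (fun y => (fun t => (⟨y.1 t, ?_⟩ : Fin (k+1)))) ?_
  · have h1 : y.1 t ≤ ∑ u, y.1 u := Finset.single_le_sum (fun i _ => Nat.zero_le _) (mem_univ t)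
    have := y.2.2.2
    omega
  · intro a b hab
    ext t
    exact congrArg Fin.val (congrFun hab t)

lemma card_eq (n m k : ℕ) :
    Nat.card {p : (Fin n → Fin 2) × (Fin n → ℕ) // Pcond n m k p}
      = ∑ w ∈ Finset.univ.filter (fun w : Fin n → Fin 2 => cnt w = m),
          (if swt w ≤ k then Mcount n (k - swt w) else 0) := by
  rw [Nat.card_congr (shearEquiv n m k)]
  have e1 : {p : (Fin n → Fin 2) × (Fin n → ℕ) // Qcond n m k p} ≃
      ((w : Fin n → Fin 2) × {y : Fin n → ℕ // cnt w = m ∧ Monotone y ∧ (∑ t, y t) + swt w = k}) :=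
    (Equiv.subtypeEquivRight fun p => Iff.rfl).trans
      (Equiv.subtypeProdEquivSigmaSubtype
        (fun (w : Fin n → Fin 2) (y : Fin n → ℕ) =>
          cnt w = m ∧ Monotone y ∧ (∑ t, y t) + swt w = k))
  rw [Nat.card_congr e1, nat_card_sigma, Finset.sum_filter]
  refine Finset.sum_congr rfl fun w _ => ?_
  by_cases hw : cnt w = m
  · rw [if_pos hw]
    by_cases hs : swt w ≤ k
    · rw [if_pos hs, Mcount]
      refine Nat.card_congr (Equiv.subtypeEquivRight fun y => ?_)
      constructor
      · rintro ⟨-, h1, h2⟩; exact ⟨h1, by omega⟩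
      · rintro ⟨h1, h2⟩; exact ⟨hw, h1, by omega⟩
    · rw [if_neg hs]
      haveI : IsEmpty {y : Fin n → ℕ // cnt w = m ∧ Monotone y ∧ (∑ t, y t) + swt w = k} := by
        constructor; rintro ⟨y, -, -, h⟩; omega
      exact Nat.card_of_isEmpty
  · rw [if_neg hw]
    haveI : IsEmpty {y : Fin n → ℕ // cnt w = m ∧ Monotone y ∧ (∑ t, y t) + swt w = k} := by
      constructor; rintro ⟨y, h, -, -⟩; exact hw h
    exact Nat.card_of_isEmpty

lemma series_eq (n m : ℕ) :
    PowerSeries.mk (fun k => (Nat.card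
      {p : (Fin n → Fin 2) × (Fin n → ℕ) // Pcond n m k p} : ℚ))
      = Uw n m * Mser n := by
  ext k
  rw [coeff_mk, Uw, Finset.sum_mul, map_sum, card_eq]
  push_cast
  refine Finset.sum_congr rfl fun w _ => ?_
  rw [coeff_X_pow_mul', Mser, coeff_mk]

end

end Stmt18



/-- Formula (4.13): the generating function over sequences ((γ_1,r_1),…,(γ_n,r_n)) with
colors in {3̲, 3} (encoded Fin 2 with 3̲ = 0 < 3 = 1), exactly m occurrences of 3,
r_1 ≥ 1 and r_{t+1} − r_t ≥ 2 if γ_{t+1} ≥ γ_t, ≥ 1 otherwise, graded by q^{Σ r_t},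
equals q^{n²+m²−nm}/((q)_m (q)_{n−m}). -/
theorem stmt18 (n m : ℕ) (hm : m ≤ n) :
    PowerSeries.mk (fun k => (Nat.card
      {p : (Fin n → Fin 2) × (Fin n → ℕ) //
        (Finset.univ.filter (fun t => p.1 t = 1)).card = m ∧
        (∀ h : 0 < n, 1 ≤ p.2 ⟨0, h⟩) ∧
        (∀ t : ℕ, (h : t + 1 < n) →
          p.2 ⟨t + 1, h⟩ ≥ p.2 ⟨t, Nat.lt_of_succ_lt h⟩ + 1 +
            (if p.1 ⟨t, Nat.lt_of_succ_lt h⟩ ≤ p.1 ⟨t + 1, h⟩ then 1 else 0)) ∧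
        (∑ t, p.2 t) = k} : ℚ)) *
      ((∏ t ∈ Finset.range m, (1 - (PowerSeries.X : PowerSeries ℚ) ^ (t + 1))) *
        (∏ t ∈ Finset.range (n - m), (1 - (PowerSeries.X : PowerSeries ℚ) ^ (t + 1))))
    = PowerSeries.X ^ (n ^ 2 + m ^ 2 - n * m) := by
  show PowerSeries.mk (fun k => (Nat.card
      {p : (Fin n → Fin 2) × (Fin n → ℕ) // Stmt18.Pcond n m k p} : ℚ)) *
      (Stmt18.Pprod m * Stmt18.Pprod (n - m)) = PowerSeries.X ^ (n ^ 2 + m ^ 2 - n * m)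
  obtain ⟨d, rfl⟩ := Nat.exists_eq_add_of_le hm
  have hd : m + d - m = d := by omega
  rw [hd]
  have h1 := Stmt18.series_eq (m+d) m
  have h2 := (Stmt18.main_UB (m+d)).1 m d (by omega)
  have h3 := Stmt18.Mser_mul_Pprod (m+d)
  have he : (m+d)^2 + m^2 - (m+d)*m = m*m + m*d + d*d := by
    have h4 : (m+d)^2 + m^2 = (m*m + m*d + d*d) + (m+d)*m := by ring
    omega
  rw [he, h1]
  calc Stmt18.Uw (m+d) m * Stmt18.Mser (m+d) * (Stmt18.Pprod m * Stmt18.Pprod d)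
      = Stmt18.Mser (m+d) * (Stmt18.Uw (m+d) m * Stmt18.Pprod m * Stmt18.Pprod d) := by ring
    _ = Stmt18.Mser (m+d) * (PowerSeries.X ^ (m*m+m*d+d*d) * Stmt18.Pprod (m+d)) := by rw [h2]
    _ = PowerSeries.X ^ (m*m+m*d+d*d) * (Stmt18.Mser (m+d) * Stmt18.Pprod (m+d)) := by ring
    _ = PowerSeries.X ^ (m*m+m*d+d*d) := by rw [h3, mul_one]
end
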